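/- Let (X, ρ) be a finite distance space and let Z ⊆ X be an independent set with |Z| ≥ 2. If for every x, y ∈ X \ Z the subspace (Z ∪ {x, y}, ρ) is (|Z| − 1)-embeddable, then (X, ρ) is strongly (|Z| − 1)-embeddable. -/

import Mathlib

/-- `(X, ρ)` is a distance space: `ρ` is symmetric, nonnegative and vanishes on the
diagonal on the points of `X`. -/
def IsDistance {α : Type*} (X : Finset α) (ρ : α → α → ℝ) : Prop :=
  (∀ x ∈ X, ∀ y ∈ X, ρ x y = ρ y x) ∧ (∀ x ∈ X, ∀ y ∈ X, 0 ≤ ρ x y) ∧ (∀ x ∈ X, ρ x x = 0)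

/-- `(X, ρ)` is isometrically embeddable into `ℝ^d`. -/
def IsEmbeddable {α : Type*} (X : Finset α) (ρ : α → α → ℝ) (d : ℕ) : Prop :=
  ∃ φ : α → EuclideanSpace ℝ (Fin d), ∀ x ∈ X, ∀ y ∈ X, ρ x y = dist (φ x) (φ y)

/-- `(X, ρ)` is strongly `d`-embeddable: `d`-embeddable but (for `d ≥ 1`)
not `(d-1)`-embeddable. -/
def IsStronglyEmbeddable {α : Type*} (X : Finset α) (ρ : α → α → ℝ) (d : ℕ) : Prop :=
  IsEmbeddable X ρ d ∧ (0 < d → ¬ IsEmbeddable X ρ (d - 1))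

/-- A nonempty set `Y` with `|Y| = r + 1` is independent if `(Y, ρ)` is strongly
`r`-embeddable. -/
def IsIndependent {α : Type*} (Y : Finset α) (ρ : α → α → ℝ) : Prop :=
  Y.Nonempty ∧ IsStronglyEmbeddable Y ρ (Y.card - 1)



open scoped RealInnerProductSpace

noncomputable section

lemma aux_uniq {F : Type*} [NormedAddCommGroup F] [InnerProductSpace ℝ F]
    {ι : Type*} (v : ι → F) (hv : Submodule.span ℝ (Set.range v) = ⊤)
    {a b : F} (hab : ∀ i, ⟪v i, a⟫ = ⟪v i, b⟫) : a = b := by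
  have key : ∀ u ∈ Submodule.span ℝ (Set.range v), ⟪u, a - b⟫ = 0 := by
    intro u hu
    induction hu using Submodule.span_induction with
    | mem u hu => obtain ⟨i, rfl⟩ := hu; rw [inner_sub_right, hab, sub_self]
    | zero => simp
    | add u w _ _ hu hw => rw [inner_add_left, hu, hw, add_zero]
    | smul c u _ hu => rw [real_inner_smul_left, hu, mul_zero]
  have h0 := key (a - b) (hv ▸ Submodule.mem_top)
  rw [inner_self_eq_zero] at h0
  exact sub_eq_zero.mp h0

lemma aux_inner {α : Type*} {ρ : α → α → ℝ} {d : ℕ} {S : Finset α}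
    {ψ : α → EuclideanSpace ℝ (Fin d)}
    (hψ : ∀ x ∈ S, ∀ y ∈ S, ρ x y = dist (ψ x) (ψ y))
    {z₀ a b : α} (hz : z₀ ∈ S) (ha : a ∈ S) (hb : b ∈ S) :
    ⟪ψ a - ψ z₀, ψ b - ψ z₀⟫ = (ρ a z₀ ^ 2 + ρ b z₀ ^ 2 - ρ a b ^ 2) / 2 := by
  have h1 : ‖ψ a - ψ z₀‖ = ρ a z₀ := by rw [hψ a ha z₀ hz, dist_eq_norm]
  have h2 : ‖ψ b - ψ z₀‖ = ρ b z₀ := by rw [hψ b hb z₀ hz, dist_eq_norm]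
  have h3 : ‖(ψ a - ψ z₀) - (ψ b - ψ z₀)‖ = ρ a b := by
    rw [sub_sub_sub_cancel_right, hψ a ha b hb, dist_eq_norm]
  have h4 := norm_sub_sq_real (ψ a - ψ z₀) (ψ b - ψ z₀)
  rw [h1, h2, h3] at h4
  linarith

lemma aux_sum {m k : ℕ} (hmk : m ≤ k) (f : Fin m → ℝ) :
    (∑ j : Fin k, if h : (j : ℕ) < m then f ⟨j, h⟩ else 0) = ∑ i : Fin m, f i := by
  rw [Fin.sum_univ_eq_sum_range (fun j => if h : j < m then f ⟨j, h⟩ else 0) k]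
  have h1 : (∑ j ∈ Finset.range k, if h : j < m then f ⟨j, h⟩ else 0)
      = ∑ j ∈ Finset.range m, if h : j < m then f ⟨j, h⟩ else 0 := by
    refine (Finset.sum_subset (Finset.range_subset_range.mpr hmk) ?_).symm
    intro j _ hj
    rw [Finset.mem_range, not_lt] at hj
    rw [dif_neg (not_lt.mpr hj)]
  rw [h1, ← Fin.sum_univ_eq_sum_range (fun j => if h : j < m then f ⟨j, h⟩ else 0) m]
  exact Finset.sum_congr rfl fun i _ => by simp

lemma aux_pad {m k : ℕ} (hmk : m ≤ k) :
    ∃ T : EuclideanSpace ℝ (Fin m) → EuclideanSpace ℝ (Fin k),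
      ∀ x y, dist (T x) (T y) = dist x y := by
  refine ⟨fun x => (WithLp.toLp 2 (fun j : Fin k => if h : (j : ℕ) < m then x ⟨j, h⟩ else 0) :
    EuclideanSpace ℝ (Fin k)), fun x y => ?_⟩
  rw [EuclideanSpace.dist_eq, EuclideanSpace.dist_eq]
  congr 1
  rw [← aux_sum hmk (fun i => dist (x i) (y i) ^ 2)]
  refine Finset.sum_congr rfl ?_
  intro j _
  by_cases h : (j : ℕ) < m
  · simp [h]
  · simp [h]

lemma aux_pair {F : Type*} [NormedAddCommGroup F] [InnerProductSpace ℝ F]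
    [FiniteDimensional ℝ F]
    {ι : Type*} [Fintype ι] (v w : ι → F)
    (hv : Submodule.span ℝ (Set.range v) = ⊤)
    (hcard : Fintype.card ι = Module.finrank ℝ F)
    (hGram : ∀ i j, ⟪v i, v j⟫ = ⟪w i, w j⟫)
    (a a' b b' : F)
    (ha : ∀ i, ⟪v i, a⟫ = ⟪w i, a'⟫)
    (hb : ∀ i, ⟪v i, b⟫ = ⟪w i, b'⟫) :
    ⟪a, b⟫ = ⟪a', b'⟫ := by
  classical
  set B := basisOfTopLeSpanOfCardEqFinrank v hv.ge hcard with hBdef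
  have hBv : ⇑B = v := coe_basisOfTopLeSpanOfCardEqFinrank v hv.ge hcard
  have hvind : LinearIndependent ℝ v := hBv ▸ B.linearIndependent
  have hsum : ∀ (g : ι → ℝ) (j : ι), ⟪v j, ∑ i, g i • v i⟫ = ⟪w j, ∑ i, g i • w i⟫ := by
    intro g j
    rw [inner_sum, inner_sum]
    refine Finset.sum_congr rfl fun i _ => ?_
    rw [real_inner_smul_right, real_inner_smul_right, hGram]
  have hwind : LinearIndependent ℝ w := by
    rw [Fintype.linearIndependent_iff]
    intro g hg
    have ht : (∑ i, g i • v i) = 0 := by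
      refine aux_uniq v hv (b := 0) fun j => ?_
      rw [hsum g j, hg, inner_zero_right, inner_zero_right]
    have := (Fintype.linearIndependent_iff.mp hvind) g ht
    exact this
  have hwspan : Submodule.span ℝ (Set.range w) = ⊤ := by
    apply Submodule.eq_top_of_finrank_eq
    rw [finrank_span_eq_card hwind, hcard]
  have hrepr : (∑ i, B.repr b i • v i) = b := by
    conv_rhs => rw [← B.sum_repr b]
    simp [hBv]
  have hb' : b' = ∑ i, B.repr b i • w i := by
    refine aux_uniq w hwspan fun j => ?_
    rw [← hsum (B.repr b) j, hrepr, ← hb j]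
  calc ⟪a, b⟫ = ⟪(∑ i, B.repr b i • v i), a⟫ := by rw [hrepr, real_inner_comm]
    _ = ∑ i, B.repr b i * ⟪v i, a⟫ := by
        rw [sum_inner]; exact Finset.sum_congr rfl fun i _ => real_inner_smul_left _ _ _
    _ = ∑ i, B.repr b i * ⟪a', w i⟫ := by
        refine Finset.sum_congr rfl fun i _ => ?_
        rw [ha i, real_inner_comm]
    _ = ⟪a', ∑ i, B.repr b i • w i⟫ := by
        rw [inner_sum]
        exact (Finset.sum_congr rfl fun i _ => (real_inner_smul_right _ _ _).symm)
    _ = ⟪a', b'⟫ := by rw [← hb']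

/-- if `Z ⊆ X` is independent with `|Z| ≥ 2` and for all `x, y ∈ X \ Z` the
subspace `Z ∪ {x, y}` is `(|Z| - 1)`-embeddable, then `(X, ρ)` is strongly
`(|Z| - 1)`-embeddable. -/
theorem stmt8 {α : Type*} [DecidableEq α] (X : Finset α) (ρ : α → α → ℝ)
    (hD : IsDistance X ρ) (Z : Finset α) (hZX : Z ⊆ X) (hZcard : 2 ≤ Z.card)
    (hZ : IsIndependent Z ρ)
    (h : ∀ x ∈ X \ Z, ∀ y ∈ X \ Z, IsEmbeddable (insert x (insert y Z)) ρ (Z.card - 1)) :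
    IsStronglyEmbeddable X ρ (Z.card - 1) := by
  classical
  obtain ⟨hρs, hρnn, hρ0⟩ := hD
  obtain ⟨hZne, hZemb, hZnot⟩ := hZ
  set n := Z.card - 1 with hn
  have hnpos : 0 < n := by omega
  obtain ⟨φ₀, hφ₀⟩ := hZemb
  obtain ⟨z₀, hz₀⟩ := hZne
  have hz₀X : z₀ ∈ X := hZX hz₀
  have hfr : Module.finrank ℝ (EuclideanSpace ℝ (Fin n)) = n := finrank_euclideanSpace_fin
  have hιcard : Fintype.card ↥(Z.erase z₀) = n := by
    rw [Fintype.card_coe, Finset.card_erase_of_mem hz₀]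
  set v : ↥(Z.erase z₀) → EuclideanSpace ℝ (Fin n) := fun i => φ₀ i - φ₀ z₀ with hv
  have hmemZ : ∀ i : ↥(Z.erase z₀), (i : α) ∈ Z := fun i => Finset.mem_of_mem_erase i.2
  constructor
  case right =>
    intro _ hembX
    obtain ⟨ψ, hψ⟩ := hembX
    exact hZnot hnpos ⟨ψ, fun p hp q hq => hψ p (hZX hp) q (hZX hq)⟩
  -- it remains to show that X is n-embeddable
  have hvspan : Submodule.span ℝ (Set.range v) = ⊤ := by
    by_contra hne
    refine hZnot hnpos ?_
    set W := Submodule.span ℝ (Set.range v) with hW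
    have hWlt : Module.finrank ℝ ↥W < n := by
      have h' : Module.finrank ℝ ↥W < Module.finrank ℝ (EuclideanSpace ℝ (Fin n)) :=
        Submodule.finrank_lt hne
      rwa [hfr] at h' 
    obtain ⟨T, hT⟩ := aux_pad (k := n - 1) (by omega : Module.finrank ℝ ↥W ≤ n - 1)
    have hmemW : ∀ a ∈ Z, φ₀ a - φ₀ z₀ ∈ W := by
      intro a haZ
      by_cases haz : a = z₀
      · subst haz; simp
      · exact Submodule.subset_span ⟨⟨a, Finset.mem_erase.mpr ⟨haz, haZ⟩⟩, rfl⟩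
    set B := stdOrthonormalBasis ℝ ↥W
    set ψ' : α → ↥W := fun a => if ha : a ∈ Z then ⟨φ₀ a - φ₀ z₀, hmemW a ha⟩ else 0 with hψ'
    refine ⟨fun a => T (B.repr (ψ' a)), ?_⟩
    intro x hx y hy
    have e1 : ψ' x = ⟨φ₀ x - φ₀ z₀, hmemW x hx⟩ := dif_pos hx
    have e2 : ψ' y = ⟨φ₀ y - φ₀ z₀, hmemW y hy⟩ := dif_pos hy
    rw [hφ₀ x hx y hy, hT, B.repr.dist_map, e1, e2, Subtype.dist_eq]
    simp [dist_eq_norm, sub_sub_sub_cancel_right]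
  set K : α → α → ℝ := fun a b => (ρ a z₀ ^ 2 + ρ b z₀ ^ 2 - ρ a b ^ 2) / 2 with hK
  have hKsymm : ∀ a ∈ X, ∀ b ∈ X, K a b = K b a := by
    intro a ha b hb
    simp only [hK]
    rw [hρs a ha b hb]; ring
  set M : EuclideanSpace ℝ (Fin n) →ₗ[ℝ] (↥(Z.erase z₀) → ℝ) :=
    { toFun := fun a i => ⟪v i, a⟫
      map_add' := by
        intro a b; funext i
        simp only [Pi.add_apply]
        exact inner_add_right _ _ _
      map_smul' := by
        intro c a; funext i
        simp only [RingHom.id_apply, Pi.smul_apply, smul_eq_mul]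
        exact real_inner_smul_right _ _ _ } with hM
  have hMinj : Function.Injective M := by
    intro a b hab
    exact aux_uniq v hvspan fun i => congrFun hab i
  have hMsurj : Function.Surjective M := by
    refine (LinearMap.injective_iff_surjective_of_finrank_eq_finrank ?_).mp hMinj
    rw [hfr, Module.finrank_pi, hιcard]
  set u : α → EuclideanSpace ℝ (Fin n) := fun x =>
    if hx : x ∈ Z then φ₀ x - φ₀ z₀ else Classical.choose (hMsurj fun i => K x i) with hu
  have huZ : ∀ x ∈ Z, u x = φ₀ x - φ₀ z₀ := fun x hx => dif_pos hx
  have huprop : ∀ x ∈ X, ∀ i : ↥(Z.erase z₀), ⟪v i, u x⟫ = K x i := by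
    intro x hx i
    by_cases hxZ : x ∈ Z
    · rw [huZ x hxZ]
      simp only [hv]
      rw [aux_inner hφ₀ hz₀ (hmemZ i) hxZ]
      simp only [hK]
      rw [hρs x hx _ (hZX (hmemZ i))]
      ring
    · have hux : u x = Classical.choose (hMsurj fun i => K x i) := dif_neg hxZ
      rw [hux]
      exact congrFun (Classical.choose_spec (hMsurj fun i => K x i)) i
  have hgen : ∀ (S : Finset α) (ψ : α → EuclideanSpace ℝ (Fin n)),
      (∀ p ∈ S, ∀ q ∈ S, ρ p q = dist (ψ p) (ψ q)) → (∀ z ∈ Z, z ∈ S) →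
      ∀ a ∈ X, ∀ b ∈ X, a ∈ S → b ∈ S → ⟪u a, u b⟫ = K a b := by
    intro S ψ hψ hZS a haX b hbX haS hbS
    have hz₀S : z₀ ∈ S := hZS z₀ hz₀
    set w : ↥(Z.erase z₀) → EuclideanSpace ℝ (Fin n) := fun i => ψ i - ψ z₀ with hw
    have hGram : ∀ i j, ⟪v i, v j⟫ = ⟪w i, w j⟫ := by
      intro i j
      simp only [hv, hw]
      rw [aux_inner hφ₀ hz₀ (hmemZ i) (hmemZ j),
        aux_inner hψ hz₀S (hZS _ (hmemZ i)) (hZS _ (hmemZ j))]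
    have hslot : ∀ c, c ∈ X → c ∈ S → ∀ i, ⟪v i, u c⟫ = ⟪w i, ψ c - ψ z₀⟫ := by
      intro c hcX hcS i
      rw [huprop c hcX i]
      simp only [hw]
      rw [aux_inner hψ hz₀S (hZS _ (hmemZ i)) hcS]
      simp only [hK]
      rw [hρs c hcX _ (hZX (hmemZ i))]
      ring
    have hpair := aux_pair v w hvspan (hιcard.trans hfr.symm) hGram
      (u a) (ψ a - ψ z₀) (u b) (ψ b - ψ z₀) (hslot a haX haS) (hslot b hbX hbS)
    rw [hpair, aux_inner hψ hz₀S haS hbS]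
  have hmain : ∀ a ∈ X, ∀ b ∈ X, ⟪u a, u b⟫ = K a b := by
    intro a haX b hbX
    by_cases haZ : a ∈ Z <;> by_cases hbZ : b ∈ Z
    · exact hgen Z φ₀ hφ₀ (fun z hz => hz) a haX b hbX haZ hbZ
    · obtain ⟨ψ, hψ⟩ := h b (Finset.mem_sdiff.mpr ⟨hbX, hbZ⟩) b (Finset.mem_sdiff.mpr ⟨hbX, hbZ⟩)
      exact hgen _ ψ hψ
        (fun z hz => Finset.mem_insert_of_mem (Finset.mem_insert_of_mem hz)) a haX b hbX
        (Finset.mem_insert_of_mem (Finset.mem_insert_of_mem haZ)) (Finset.mem_insert_self b _)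
    · obtain ⟨ψ, hψ⟩ := h a (Finset.mem_sdiff.mpr ⟨haX, haZ⟩) a (Finset.mem_sdiff.mpr ⟨haX, haZ⟩)
      exact hgen _ ψ hψ
        (fun z hz => Finset.mem_insert_of_mem (Finset.mem_insert_of_mem hz)) a haX b hbX
        (Finset.mem_insert_self a _) (Finset.mem_insert_of_mem (Finset.mem_insert_of_mem hbZ))
    · obtain ⟨ψ, hψ⟩ := h a (Finset.mem_sdiff.mpr ⟨haX, haZ⟩) b (Finset.mem_sdiff.mpr ⟨hbX, hbZ⟩)
      exact hgen _ ψ hψ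
        (fun z hz => Finset.mem_insert_of_mem (Finset.mem_insert_of_mem hz)) a haX b hbX
        (Finset.mem_insert_self a _) (Finset.mem_insert_of_mem (Finset.mem_insert_self b _))
  refine ⟨fun x => φ₀ z₀ + u x, ?_⟩
  intro a haX b hbX
  have h1 := norm_sub_sq_real (u a) (u b)
  have h2 : ‖u a‖ ^ 2 = K a a := by
    rw [← real_inner_self_eq_norm_sq, hmain a haX a haX]
  have h3 : ‖u b‖ ^ 2 = K b b := by
    rw [← real_inner_self_eq_norm_sq, hmain b hbX b hbX]
  have h4 := hmain a haX b hbX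
  have hsq : ρ a b ^ 2 = ‖u a - u b‖ ^ 2 := by
    rw [h1, h2, h3, h4]
    simp only [hK]
    rw [hρ0 a haX, hρ0 b hbX]
    ring
  have hval : ρ a b = ‖u a - u b‖ := by
    rw [← Real.sqrt_sq (hρnn a haX b hbX), hsq, Real.sqrt_sq (norm_nonneg _)]
  rw [dist_eq_norm, add_sub_add_left_eq_sub]
  exact hval
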